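/- The supremum over x > 0 of Φ(x) - x²/(1 + x²) is strictly less than 0.5410, where Φ is the standard normal distribution function. -/

import Mathlib

open MeasureTheory Real Set

noncomputable def Phi (x : ℝ) : ℝ :=
  (Real.sqrt (2 * Real.pi))⁻¹ * ∫ t in Set.Iio x, Real.exp (-t ^ 2 / 2)

lemma gauss_integrable : Integrable (fun t : ℝ => Real.exp (-t ^ 2 / 2)) := by
  have h := integrable_exp_neg_mul_sq (show (0:ℝ) < 1/2 by norm_num)
  convert h using 2 with t
  ring_nf

lemma gauss_total : ∫ t : ℝ, Real.exp (-t ^ 2 / 2) = Real.sqrt (2 * Real.pi) := by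
  have h := integral_gaussian (1/2)
  rw [show Real.pi / (1/2) = 2 * Real.pi by ring] at h
  rw [← h]
  congr 1
  ext t
  ring_nf

lemma gauss_Iic : ∫ t in Iic (0:ℝ), Real.exp (-t ^ 2 / 2) = Real.sqrt (2 * Real.pi) / 2 := by
  have h1 : ∫ t in Iic (0:ℝ), Real.exp (-t ^ 2 / 2)
      = ∫ t in Ioi (0:ℝ), Real.exp (-t ^ 2 / 2) := by
    rw [← neg_zero, ← integral_comp_neg_Iic]
    norm_num
  have h2 := integral_gaussian_Ioi (1/2)
  rw [show Real.pi / (1/2) = 2 * Real.pi by ring] at h2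
  rw [h1, ← h2]
  congr 1
  ext t
  ring_nf

lemma sqrt_two_pi_pos : 0 < Real.sqrt (2 * Real.pi) :=
  Real.sqrt_pos.mpr (by positivity)

lemma sqrt_two_pi_ge : (2.5066 : ℝ) ≤ Real.sqrt (2 * Real.pi) := by
  rw [show (2.5066:ℝ) = Real.sqrt (2.5066^2) by
    rw [Real.sqrt_sq (by norm_num)]]
  apply Real.sqrt_le_sqrt
  nlinarith [Real.pi_gt_d6]

lemma Phi_eq (x : ℝ) : Phi x = 1/2 + (Real.sqrt (2 * Real.pi))⁻¹ *
    ∫ t in (0:ℝ)..x, Real.exp (-t ^ 2 / 2) := by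
  have hIio : ∫ t in Iio x, Real.exp (-t ^ 2 / 2)
      = ∫ t in Iic x, Real.exp (-t ^ 2 / 2) :=
    setIntegral_congr_set Iio_ae_eq_Iic
  have hsub := intervalIntegral.integral_Iic_sub_Iic (gauss_integrable.integrableOn (s := Iic (0:ℝ)))
    (gauss_integrable.integrableOn (s := Iic x))
  rw [gauss_Iic] at hsub
  unfold Phi
  rw [hIio, show (∫ t in Iic x, Real.exp (-t ^ 2 / 2))
      = Real.sqrt (2 * Real.pi) / 2 + ∫ t in (0:ℝ)..x, Real.exp (-t ^ 2 / 2) by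
    linarith, mul_add]
  congr 1
  field_simp

lemma Phi_le_one (x : ℝ) : Phi x ≤ 1 := by
  unfold Phi
  have h : ∫ t in Iio x, Real.exp (-t ^ 2 / 2) ≤ ∫ t : ℝ, Real.exp (-t ^ 2 / 2) :=
    setIntegral_le_integral gauss_integrable
      (Filter.Eventually.of_forall fun t => (Real.exp_pos _).le)
  rw [gauss_total] at h
  calc (Real.sqrt (2 * Real.pi))⁻¹ * ∫ t in Iio x, Real.exp (-t ^ 2 / 2)
      ≤ (Real.sqrt (2 * Real.pi))⁻¹ * Real.sqrt (2 * Real.pi) := by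
        apply mul_le_mul_of_nonneg_left h (inv_nonneg.mpr sqrt_two_pi_pos.le)
    _ = 1 := inv_mul_cancel₀ sqrt_two_pi_pos.ne'

lemma exp_ptwise (t : ℝ) (ht : t ∈ Icc (0:ℝ) 0.93) :
    Real.exp (-t ^ 2 / 2) ≤ 1 - t ^ 2 / 2 + t ^ 4 / 8 + t ^ 6 / 36 := by
  obtain ⟨h0, h1⟩ := ht
  have hu : |(-t ^ 2 / 2 : ℝ)| ≤ 1 := by
    rw [abs_le]; constructor <;> nlinarith
  have h := Real.exp_bound hu (show 0 < 3 by norm_num)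
  have h' := (abs_sub_le_iff.1 h).1
  have hsum : ∑ m ∈ Finset.range 3, (-t ^ 2 / 2) ^ m / m.factorial
      = 1 - t ^ 2 / 2 + t ^ 4 / 8 := by
    simp [Finset.sum_range_succ]
    ring
  rw [hsum] at h'
  have habs : |(-t ^ 2 / 2 : ℝ)| = t ^ 2 / 2 := by
    rw [abs_of_nonpos (by nlinarith)]; ring
  rw [habs] at h'
  have : ((3:ℕ).succ / ((3:ℕ).factorial * (3:ℕ)) : ℝ) = 2/9 := by
    norm_num [Nat.factorial]
  rw [this] at h'
  nlinarith [h']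

lemma integral_poly (x : ℝ) :
    ∫ t in (0:ℝ)..x, (1 - t ^ 2 / 2 + t ^ 4 / 8 + t ^ 6 / 36)
      = x - x ^ 3 / 6 + x ^ 5 / 40 + x ^ 7 / 252 := by
  have key : ∀ t ∈ Set.uIcc (0:ℝ) x,
      HasDerivAt (fun s => s - s ^ 3 / 6 + s ^ 5 / 40 + s ^ 7 / 252)
        (1 - t ^ 2 / 2 + t ^ 4 / 8 + t ^ 6 / 36) t := by
    intro t _
    have h : HasDerivAt (fun s : ℝ => s - s ^ 3 / 6 + s ^ 5 / 40 + s ^ 7 / 252) _ t :=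
      (((hasDerivAt_id t).sub ((hasDerivAt_pow 3 t).div_const 6)).add
      ((hasDerivAt_pow 5 t).div_const 40)).add ((hasDerivAt_pow 7 t).div_const 252)
    convert h using 1
    norm_num
    ring
  rw [intervalIntegral.integral_eq_sub_of_hasDerivAt key]
  · ring
  · apply Continuous.intervalIntegrable
    continuity

lemma interval_int_bound (x : ℝ) (h0 : 0 ≤ x) (h1 : x ≤ 0.93) :
    ∫ t in (0:ℝ)..x, Real.exp (-t ^ 2 / 2)
      ≤ x - x ^ 3 / 6 + x ^ 5 / 40 + x ^ 7 / 252 := by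
  rw [← integral_poly x]
  apply intervalIntegral.integral_mono_on h0
  · exact (Real.continuous_exp.comp (by continuity)).intervalIntegrable _ _
  · exact (by continuity : Continuous fun t : ℝ =>
      1 - t ^ 2 / 2 + t ^ 4 / 8 + t ^ 6 / 36).intervalIntegrable _ _
  · intro t ht
    exact exp_ptwise t ⟨ht.1, le_trans ht.2 h1⟩

lemma poly_ineq (x : ℝ) (h0 : 0 < x) (h1 : x ≤ 0.93) :
    (x - x ^ 3 / 6 + x ^ 5 / 40 + x ^ 7 / 252 - 2.5066 * 0.04099) * (1 + x ^ 2)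
      ≤ 2.5066 * x ^ 2 := by
  have hsq : x ^ 2 ≤ 0.8649 := by nlinarith
  have hx4 : x ^ 4 ≤ 0.8649 ^ 2 := by nlinarith [sq_nonneg x]
  have hr : 0 ≤ x ^ 5 * (17 / 120 - 73 / 2520 * x ^ 2 - x ^ 4 / 252) := by
    apply mul_nonneg (pow_nonneg h0.le 5)
    nlinarith
  have hq : 0 ≤ (x - 0.21343) ^ 2 * (0.93 - x) :=
    mul_nonneg (sq_nonneg _) (by linarith)
  nlinarith [hr, hq, sq_nonneg (x - 0.21343), h0.le, h1]

theorem stmt_15 :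
    sSup {y : ℝ | ∃ x > 0, y = Phi x - x ^ 2 / (1 + x ^ 2)} < 0.5410 := by
  have hle : sSup {y : ℝ | ∃ x > 0, y = Phi x - x ^ 2 / (1 + x ^ 2)} ≤ 0.54099 := by
    apply Real.sSup_le
    · rintro y ⟨x, hx, rfl⟩
      have hpos : (0:ℝ) < 1 + x ^ 2 := by positivity
      rcases le_or_gt x 0.93 with hc | hc
      · -- small x
        have hb := interval_int_bound x hx.le hc
        have hsq : x ^ 2 ≤ 0.8649 := by nlinarith
        have hcube : x ^ 3 ≤ 0.8649 * x := by nlinarith [mul_nonneg hx.le (sub_nonneg.mpr hsq)]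
        have hP0 : 0 ≤ x - x ^ 3 / 6 + x ^ 5 / 40 + x ^ 7 / 252 := by
          nlinarith [pow_nonneg hx.le 5, pow_nonneg hx.le 7]
        have hdiv : (Real.sqrt (2 * Real.pi))⁻¹ * (x - x ^ 3 / 6 + x ^ 5 / 40 + x ^ 7 / 252)
            ≤ (x - x ^ 3 / 6 + x ^ 5 / 40 + x ^ 7 / 252) / 2.5066 := by
          rw [inv_mul_eq_div]
          exact div_le_div_of_nonneg_left hP0 (by norm_num) sqrt_two_pi_ge
        have hPhi : Phi x ≤ 1/2 +
            (x - x ^ 3 / 6 + x ^ 5 / 40 + x ^ 7 / 252) / 2.5066 := by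
          rw [Phi_eq x]
          have hmul := mul_le_mul_of_nonneg_left hb (inv_nonneg.mpr sqrt_two_pi_pos.le)
          linarith
        have hkey : x - x ^ 3 / 6 + x ^ 5 / 40 + x ^ 7 / 252 - 2.5066 * 0.04099
            ≤ 2.5066 * x ^ 2 / (1 + x ^ 2) := by
          rw [le_div_iff₀ hpos]
          exact poly_ineq x hx hc
        have hxd : 2.5066 * x ^ 2 / (1 + x ^ 2) = 2.5066 * (x ^ 2 / (1 + x ^ 2)) := by
          ring
        rw [hxd] at hkey
        norm_num at hPhi hkey ⊢
        linarith
      · -- large x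
        have h1 : (1:ℝ) / (1 + x ^ 2) ≤ 1 / 1.8649 := by
          apply one_div_le_one_div_of_le (by norm_num)
          nlinarith
        have h2 : x ^ 2 / (1 + x ^ 2) = 1 - 1 / (1 + x ^ 2) := by
          field_simp
          ring
        have h3 := Phi_le_one x
        rw [h2]
        norm_num at h1 ⊢
        linarith
    · norm_num
  linarith [hle]
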